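/- Let h be a positive integer, let φ(x_1,…,x_h) = c_1x_1 + ⋯ + c_hx_h be a linear form with integer coefficients satisfying condition N, and set C = Σ_{i=1}^h |c_i|. Let B = {b_1 < b_2 < ⋯} be a strictly increasing sequence of integers and let m ≥ 0 be such that b_1 > m and b_{k+1} > C·b_k + (C+1)·m for all positive integers k. Then there exist a sequence a_1, a_2, … of integers forming a φ-Sidon set A = {a_k : k ≥ 1} and a constant m_0 > 0 such that |a_k − b_k| < m_0 for all positive integers k. -/

import Mathlib

/-- `A` is a Sidon set for the linear form `φ(x₁,…,x_h) = c₁x₁ + ⋯ + c_hx_h`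
with integer coefficients `c`. -/
def IsSidon {h : ℕ} (c : Fin h → ℤ) (A : Set ℤ) : Prop :=
  ∀ a a' : Fin h → ℤ, (∀ i, a i ∈ A) → (∀ i, a' i ∈ A) →
    (∑ i, c i * a i) = (∑ i, c i * a' i) → a = a'

/-- The linear form with coefficients `c` satisfies condition N. -/
def ConditionN {h : ℕ} (c : Fin h → ℤ) : Prop :=
  ¬ ∃ I₁ I₂ : Finset (Fin h), Disjoint I₁ I₂ ∧ (I₁.Nonempty ∨ I₂.Nonempty) ∧
      ∑ i ∈ I₁, c i = ∑ i ∈ I₂, c i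

open Finset in
/-- Termwise bound on the "lower order" part of the sum. -/
lemma aux_low {h : ℕ} (d : Fin h → ℤ) (b : ℕ → ℤ) (hbpos : ∀ k, 0 < b k)
    (hbmono : Monotone b) (N : ℕ) (u : Fin h → ℕ) (hu : ∀ i, u i ≤ N + 1) :
    ∑ i ∈ univ.filter (fun i => ¬ u i = N + 1), d i * b (u i) ≤
      (∑ i, max (d i) 0) * b N := by
  calc ∑ i ∈ univ.filter (fun i => ¬ u i = N + 1), d i * b (u i)
      ≤ ∑ i ∈ univ.filter (fun i => ¬ u i = N + 1), max (d i) 0 * b N := by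
        apply Finset.sum_le_sum
        intro i hi
        have hui : u i ≤ N := by
          have h1 := hu i
          have h2 := (Finset.mem_filter.mp hi).2
          omega
        have hb1 : b (u i) ≤ b N := hbmono hui
        have hb2 : 0 < b (u i) := hbpos _
        rcases le_or_gt 0 (d i) with hc | hc
        · rw [max_eq_left hc]; exact mul_le_mul_of_nonneg_left hb1 hc
        · rw [max_eq_right hc.le, zero_mul]
          exact le_of_lt (mul_neg_of_neg_of_pos hc hb2)
    _ ≤ ∑ i, max (d i) 0 * b N := by
        apply Finset.sum_le_sum_of_subset_of_nonneg (Finset.filter_subset _ _)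
        intro i _ _
        exact mul_nonneg (le_max_right _ _) (hbpos N).le
    _ = (∑ i, max (d i) 0) * b N := (Finset.sum_mul _ _ _).symm

open Finset in
/-- Splitting of the sum according to whether `u i` attains the top index. -/
lemma aux_split {h : ℕ} (c : Fin h → ℤ) (b : ℕ → ℤ) (N : ℕ) (u : Fin h → ℕ) :
    ∑ i, c i * b (u i) = (∑ i ∈ univ.filter (fun i => u i = N + 1), c i) * b (N + 1)
      + ∑ i ∈ univ.filter (fun i => ¬ u i = N + 1), c i * b (u i) := by
  rw [Finset.sum_mul, ← Finset.sum_filter_add_sum_filter_not univ (fun i => u i = N + 1)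
    (fun i => c i * b (u i))]
  congr 1
  exact Finset.sum_congr rfl (fun i hi => by rw [(Finset.mem_filter.mp hi).2])

open Finset in
/-- Main comparison: the top coefficient sums can differ by at most `C·b N / b (N+1)`. -/
lemma aux_bound {h : ℕ} (c : Fin h → ℤ) (b : ℕ → ℤ) (hbpos : ∀ k, 0 < b k)
    (hbmono : Monotone b) (N : ℕ) (f g : Fin h → ℕ)
    (hf : ∀ i, f i ≤ N + 1) (hg : ∀ i, g i ≤ N + 1)
    (hsum : ∑ i, c i * b (f i) = ∑ i, c i * b (g i)) :
    (∑ i ∈ univ.filter (fun i => f i = N + 1), c i) * b (N + 1) ≤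
      (∑ i ∈ univ.filter (fun i => g i = N + 1), c i) * b (N + 1) + (∑ i, |c i|) * b N := by
  have hsf := aux_split c b N f
  have hsg := aux_split c b N g
  have h1 : ∑ i ∈ univ.filter (fun i => ¬ g i = N + 1), c i * b (g i) ≤
      (∑ i, max (c i) 0) * b N := aux_low c b hbpos hbmono N g hg
  have h2 : ∑ i ∈ univ.filter (fun i => ¬ f i = N + 1), (fun j => -c j) i * b (f i) ≤
      (∑ i, max (-c i) 0) * b N := aux_low (fun j => -c j) b hbpos hbmono N f hf
  have h2' : -(∑ i ∈ univ.filter (fun i => ¬ f i = N + 1), c i * b (f i)) ≤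
      (∑ i, max (-c i) 0) * b N := by
    rw [← Finset.sum_neg_distrib]
    simpa [neg_mul] using h2
  have habs : (∑ i, max (c i) 0) + (∑ i, max (-c i) 0) = ∑ i, |c i| := by
    rw [← Finset.sum_add_distrib]
    apply Finset.sum_congr rfl
    intro i _
    rcases le_total 0 (c i) with hc | hc
    · rw [max_eq_left hc, max_eq_right (neg_nonpos.mpr hc), abs_of_nonneg hc, add_zero]
    · rw [max_eq_right hc, max_eq_left (neg_nonneg.mpr hc), abs_of_nonpos hc, zero_add]
  nlinarith [hbpos N]

open Finset in
theorem statement2 {h : ℕ} (hh : 0 < h) (c : Fin h → ℤ) (hN : ConditionN c)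
    (b : ℕ → ℤ) (hb : StrictMono b) (m : ℤ) (hm : 0 ≤ m)
    (hb1 : b 0 > m)
    (hgrow : ∀ k : ℕ, b (k + 1) > (∑ i, |c i|) * b k + ((∑ i, |c i|) + 1) * m) :
    ∃ (a : ℕ → ℤ) (m₀ : ℤ), 0 < m₀ ∧ IsSidon c (Set.range a) ∧
      ∀ k : ℕ, |a k - b k| < m₀ := by
  have hbpos : ∀ k, 0 < b k := fun k =>
    lt_of_le_of_lt hm (lt_of_lt_of_le hb1 (hb.monotone (Nat.zero_le k)))
  have hC : 0 ≤ ∑ i, |c i| := Finset.sum_nonneg fun i _ => abs_nonneg _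
  -- from condition N : subset sums are injective
  have hsub : ∀ I J : Finset (Fin h), ∑ i ∈ I, c i = ∑ i ∈ J, c i → I = J := by
    intro I J hIJ
    by_contra hne
    apply hN
    refine ⟨I \ J, J \ I, disjoint_sdiff_sdiff, ?_, ?_⟩
    · by_contra hcon
      push_neg at hcon
      obtain ⟨h1, h2⟩ := hcon
      rw [Finset.sdiff_eq_empty_iff_subset] at h1 h2
      exact hne (Finset.Subset.antisymm h1 h2)
    · have e1 : ∑ i ∈ I \ J, c i = ∑ i ∈ I, c i - ∑ i ∈ I ∩ J, c i := by
        rw [← Finset.sdiff_inter_self_left I J]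
        exact Finset.sum_sdiff_eq_sub (Finset.inter_subset_left)
      have e2 : ∑ i ∈ J \ I, c i = ∑ i ∈ J, c i - ∑ i ∈ J ∩ I, c i := by
        rw [← Finset.sdiff_inter_self_left J I]
        exact Finset.sum_sdiff_eq_sub Finset.inter_subset_left
      rw [e1, e2, hIJ, Finset.inter_comm]
  -- key lemma : index functions bounded by N with equal sums are equal
  have key : ∀ N : ℕ, ∀ f g : Fin h → ℕ, (∀ i, f i ≤ N) → (∀ i, g i ≤ N) →
      ∑ i, c i * b (f i) = ∑ i, c i * b (g i) → f = g := by
    intro N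
    induction N with
    | zero =>
      intro f g hf hg _
      funext i
      have := hf i; have := hg i; omega
    | succ N ih =>
      intro f g hf hg hsum
      set I : Finset (Fin h) := univ.filter (fun i => f i = N + 1) with hI
      set J : Finset (Fin h) := univ.filter (fun i => g i = N + 1) with hJ
      by_cases hIJ : I = J
      · -- replace top occurrences by 0 and use induction
        set f' : Fin h → ℕ := fun i => if f i = N + 1 then 0 else f i with hf'
        set g' : Fin h → ℕ := fun i => if g i = N + 1 then 0 else g i with hg'
        have shift : ∀ (u : Fin h → ℕ),
            ∑ i, c i * b (u i) =
              (∑ i, c i * b (if u i = N + 1 then 0 else u i))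
                + ∑ i ∈ univ.filter (fun i => u i = N + 1), c i * (b (N + 1) - b 0) := by
          intro u
          rw [Finset.sum_filter, ← Finset.sum_add_distrib]
          apply Finset.sum_congr rfl
          intro i _
          by_cases hui : u i = N + 1 <;> simp [hui] <;> ring
        have hs1 := shift f
        have hs2 := shift g
        rw [← hI] at hs1
        rw [← hJ] at hs2
        have hsum' : ∑ i, c i * b (f' i) = ∑ i, c i * b (g' i) := by
          have : ∑ i ∈ I, c i * (b (N + 1) - b 0) = ∑ i ∈ J, c i * (b (N + 1) - b 0) := by
            rw [hIJ]
          simp only [hf', hg']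
          linarith [hs1, hs2, hsum, this]
        have heq : f' = g' := by
          apply ih f' g'
          · intro i; simp only [hf']; have := hf i; split <;> omega
          · intro i; simp only [hg']; have := hg i; split <;> omega
          · exact hsum'
        funext i
        by_cases hfi : f i = N + 1
        · have hiI : i ∈ I := by simp [hI, hfi]
          have hiJ : i ∈ J := hIJ ▸ hiI
          have : g i = N + 1 := by simpa [hJ] using hiJ
          rw [hfi, this]
        · have hgi : ¬ g i = N + 1 := by
            intro hgi
            have hiJ : i ∈ J := by simp [hJ, hgi]
            have hiI : i ∈ I := hIJ ▸ hiJ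
            exact hfi (by simpa [hI] using hiI)
          have := congrFun heq i
          simpa [hf', hg', hfi, hgi] using this
      · -- contradiction via the growth condition
        exfalso
        have hd : ∑ i ∈ I, c i ≠ ∑ i ∈ J, c i := fun hc' => hIJ (hsub I J hc')
        have b1 := aux_bound c b hbpos hb.monotone N f g hf hg hsum
        have b2 := aux_bound c b hbpos hb.monotone N g f hg hf hsum.symm
        rw [← hI, ← hJ] at b1 b2
        have hgr := hgrow N
        have hBN1 : 0 < b (N + 1) := hbpos _
        have hCm : 0 ≤ ((∑ i, |c i|) + 1) * m := mul_nonneg (by linarith) hm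
        -- b (N+1) > C * b N
        have hbig : (∑ i, |c i|) * b N < b (N + 1) := by linarith
        rcases lt_or_gt_of_ne hd with hlt | hgt
        · -- ∑_J c ≥ ∑_I c + 1
          have h1 : (∑ i ∈ I, c i) + 1 ≤ ∑ i ∈ J, c i := hlt
          nlinarith [b2]
        · have h1 : (∑ i ∈ J, c i) + 1 ≤ ∑ i ∈ I, c i := hgt
          nlinarith [b1]
  -- conclude
  refine ⟨b, 1, one_pos, ?_, fun k => by simp⟩
  intro a a' ha ha' hsum
  choose f hf using fun i => ha i
  choose g hg using fun i => ha' i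
  set N : ℕ := (univ.sup f) ⊔ (univ.sup g) with hN'
  have hfa : ∀ i, a i = b (f i) := fun i => (hf i).symm
  have hga : ∀ i, a' i = b (g i) := fun i => (hg i).symm
  have hsum' : ∑ i, c i * b (f i) = ∑ i, c i * b (g i) := by
    simpa [hfa, hga] using hsum
  have hfg := key N f g
    (fun i => le_trans (Finset.le_sup (Finset.mem_univ i)) le_sup_left)
    (fun i => le_trans (Finset.le_sup (Finset.mem_univ i)) le_sup_right)
    hsum'
  funext i
  rw [hfa i, hga i, congrFun hfg i]
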